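/- arXiv:1809.05414 — 3 statements merged into one kernel-verified Lean document; each statement's English description precedes it below -/
import Mathlib

section
/- The function W(x) = (1 + |x|²/15)^(−3/2) on ℝ⁵ satisfies the elliptic equation ΔW + W^(7/3) = 0. -/
noncomputable section

open MeasureTheory

/-- The ground state on ℝ⁵. -/
def W (x : EuclideanSpace ℝ (Fin 5)) : ℝ := (1 + ‖x‖ ^ 2 / 15) ^ (-(3 : ℝ) / 2)

/-- The Laplacian as the sum of second partial derivatives. -/
def lap (f : EuclideanSpace ℝ (Fin 5) → ℝ) (x : EuclideanSpace ℝ (Fin 5)) : ℝ :=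
  ∑ i : Fin 5,
    fderiv ℝ (fun y => fderiv ℝ f y (EuclideanSpace.single i 1)) x (EuclideanSpace.single i 1)

local notation "E5" => EuclideanSpace ℝ (Fin 5)

lemma u_pos (x : E5) : (0:ℝ) < 1 + ‖x‖ ^ 2 / 15 := by positivity

lemma hasFDerivAt_u (x : E5) :
    HasFDerivAt (fun y : E5 => 1 + ‖y‖ ^ 2 / 15) ((2/15 : ℝ) • innerSL ℝ x) x := by
  have h := ((hasFDerivAt_id x).norm_sq.const_mul ((15:ℝ)⁻¹)).const_add (1:ℝ)
  have e : (fun y : E5 => 1 + (15:ℝ)⁻¹ * ‖y‖ ^ 2) = fun y : E5 => 1 + ‖y‖ ^ 2 / 15 := by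
    ext y; ring
  simp only [id_eq] at h
  rw [e] at h
  refine h.congr_fderiv ?_
  ext v
  simp [smul_smul]
  ring

lemma hasFDerivAt_up (p : ℝ) (x : E5) :
    HasFDerivAt (fun y : E5 => (1 + ‖y‖ ^ 2 / 15) ^ p)
      ((p * (1 + ‖x‖ ^ 2 / 15) ^ (p - 1) * (2/15)) • innerSL ℝ x) x := by
  have h := (Real.hasDerivAt_rpow_const (p := p)
      (Or.inl (u_pos x).ne')).comp_hasFDerivAt x (hasFDerivAt_u x)
  simpa [smul_smul, mul_assoc, Function.comp_def] using h

lemma inner_single_one (y : E5) (i : Fin 5) :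
    (innerSL ℝ y) (EuclideanSpace.single i 1) = y i := by
  simp [EuclideanSpace.inner_single_right]

lemma fderiv_W_eq (y : E5) :
    fderiv ℝ W y = ((-(3:ℝ)/2 * (1 + ‖y‖ ^ 2 / 15) ^ (-(3:ℝ)/2 - 1) * (2/15)) • innerSL ℝ y) :=
  (hasFDerivAt_up (-(3:ℝ)/2) y).fderiv

lemma second (i : Fin 5) (x : E5) :
    fderiv ℝ (fun y => fderiv ℝ W y (EuclideanSpace.single i 1)) x (EuclideanSpace.single i 1)
    = (-(1:ℝ)/5) * ((-(1:ℝ)/3) * (1 + ‖x‖ ^ 2 / 15) ^ (-(7:ℝ)/2) * (x i * x i)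
        + (1 + ‖x‖ ^ 2 / 15) ^ (-(5:ℝ)/2)) := by
  have e : (fun y : E5 => fderiv ℝ W y (EuclideanSpace.single i 1))
      = fun y : E5 => (-(1:ℝ)/5) * ((1 + ‖y‖ ^ 2 / 15) ^ (-(5:ℝ)/2) * y i) := by
    ext y
    rw [fderiv_W_eq]
    have : (-(3:ℝ)/2 - 1) = -(5:ℝ)/2 := by norm_num
    simp [inner_single_one, this]
    ring
  rw [e]
  have hA := hasFDerivAt_up (-(5:ℝ)/2) x
  have hB : HasFDerivAt (fun y : E5 => (y i : ℝ)) (EuclideanSpace.proj i : E5 →L[ℝ] ℝ) x := by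
    exact (EuclideanSpace.proj i : E5 →L[ℝ] ℝ).hasFDerivAt
  have h := (hA.mul hB).const_mul (-(1:ℝ)/5)
  rw [HasFDerivAt.fderiv (f := fun y : E5 => (-(1:ℝ)/5) * ((1 + ‖y‖ ^ 2 / 15) ^ (-(5:ℝ)/2) * y i)) h]
  have h57 : (1 + ‖x‖ ^ 2 / 15 : ℝ) ^ (-(5:ℝ)/2 - 1) = (1 + ‖x‖ ^ 2 / 15) ^ (-(7:ℝ)/2) := by
    norm_num
  simp [inner_single_one, h57]
  ring

theorem ground_state_equation :
    ∀ x : EuclideanSpace ℝ (Fin 5), lap W x + (W x) ^ ((7 : ℝ) / 3) = 0 := by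
  intro x
  have hu : (0:ℝ) < 1 + ‖x‖ ^ 2 / 15 := u_pos x
  have hsum : ∑ i : Fin 5, x i * x i = ‖x‖ ^ 2 := by
    rw [← real_inner_self_eq_norm_sq]
    rfl
  have hlap : lap W x = (-(1:ℝ)/5) * ((-(1:ℝ)/3) * (1 + ‖x‖ ^ 2 / 15) ^ (-(7:ℝ)/2) * ‖x‖ ^ 2)
      + 5 * ((-(1:ℝ)/5) * (1 + ‖x‖ ^ 2 / 15) ^ (-(5:ℝ)/2)) := by
    unfold lap
    rw [Finset.sum_congr rfl (fun i _ => second i x)]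
    simp only [mul_add, Finset.sum_add_distrib, Finset.sum_const, Finset.card_univ,
      Fintype.card_fin, nsmul_eq_mul, ← Finset.mul_sum, hsum]
    ring
  have h57 : (1 + ‖x‖ ^ 2 / 15 : ℝ) ^ (-(5:ℝ)/2)
      = (1 + ‖x‖ ^ 2 / 15) ^ (-(7:ℝ)/2) * (1 + ‖x‖ ^ 2 / 15) := by
    rw [← Real.rpow_add_one hu.ne']
    norm_num
  have hW : W x ^ ((7:ℝ)/3) = (1 + ‖x‖ ^ 2 / 15) ^ (-(7:ℝ)/2) := by
    show ((1 + ‖x‖ ^ 2 / 15 : ℝ) ^ (-(3:ℝ)/2)) ^ ((7:ℝ)/3) = _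
    rw [← Real.rpow_mul hu.le]
    norm_num
  rw [hlap, hW, h57]
  ring
end
end

section
/- For every p > 1 and every finite family of real numbers (r_k)_{k=1}^K, one has ||Σ_k r_k|^p − Σ_k |r_k|^p| ≤ C(p,K) Σ_{k'≠k} |r_{k'}| |r_k|^(p−1) for some constant C(p,K) depending only on p and K. -/
noncomputable section

open Real Finset

private lemma rpow_sub_rpow_aux {p B x y : ℝ} (hp : 1 ≤ p) (hy : 0 ≤ y) (hyx : y ≤ x)
    (hxB : x ≤ B) : x ^ p - y ^ p ≤ p * B ^ (p - 1) * (x - y) := by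
  have hx : 0 ≤ x := hy.trans hyx
  have hp0 : 0 < p := lt_of_lt_of_le one_pos hp
  rcases eq_or_lt_of_le hx with h0 | hxpos
  · have hy0 : y = 0 := le_antisymm (hyx.trans h0.symm.le) hy
    rw [← h0, hy0]
    simp [Real.zero_rpow hp0.ne']
  · set s : ℝ := (y - x) / x with hs
    have hs1 : -1 ≤ s := by
      rw [hs, le_div_iff₀ hxpos]
      linarith
    have hbern := one_add_mul_self_le_rpow_one_add hs1 hp
    have h1s : 1 + s = y / x := by
      field_simp [hs]
      rw [add_mul, hs, div_mul_cancel₀ _ hxpos.ne']; ring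
    rw [h1s, Real.div_rpow hy hx] at hbern
    have hxp : (0:ℝ) < x ^ p := Real.rpow_pos_of_pos hxpos p
    have key : x ^ p + p * s * x ^ p ≤ y ^ p := by
      have := mul_le_mul_of_nonneg_right hbern hxp.le
      rw [div_mul_cancel₀ _ hxp.ne'] at this
      linarith [this]
    have hsx : s * x ^ p = (y - x) * x ^ (p - 1) := by
      have hxps : x ^ p = x * x ^ (p - 1) := by
        rw [← Real.rpow_one_add' hx (by simp [hp0.ne'])]
        ring_nf
      rw [hs, hxps]
      field_simp
    have hxB' : x ^ (p - 1) ≤ B ^ (p - 1) :=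
      Real.rpow_le_rpow hx hxB (by linarith)
    have hstep : x ^ p - y ^ p ≤ p * x ^ (p - 1) * (x - y) := by
      have hk := key
      rw [mul_assoc, hsx] at hk
      nlinarith
    refine hstep.trans ?_
    have hxy : 0 ≤ x - y := by linarith
    have : p * x ^ (p - 1) * (x - y) ≤ p * B ^ (p - 1) * (x - y) := by
      apply mul_le_mul_of_nonneg_right _ hxy
      exact mul_le_mul_of_nonneg_left hxB' hp0.le
    linarith

private lemma abs_rpow_sub_rpow_aux {p B x y : ℝ} (hp : 1 ≤ p) (hx : 0 ≤ x) (hy : 0 ≤ y)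
    (hxB : x ≤ B) (hyB : y ≤ B) : |x ^ p - y ^ p| ≤ p * B ^ (p - 1) * |x - y| := by
  have hp' : (0:ℝ) ≤ p := zero_le_one.trans hp
  rcases le_total y x with h | h
  · rw [abs_of_nonneg (by linarith [Real.rpow_le_rpow hy h hp'] : (0:ℝ) ≤ x ^ p - y ^ p),
      abs_of_nonneg (by linarith)]
    exact rpow_sub_rpow_aux hp hy h hxB
  · rw [abs_sub_comm, abs_sub_comm x y,
      abs_of_nonneg (by linarith [Real.rpow_le_rpow hx h hp'] : (0:ℝ) ≤ y ^ p - x ^ p),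
      abs_of_nonneg (by linarith)]
    exact rpow_sub_rpow_aux hp hx h hyB

theorem abs_pow_sum_sub_sum_pow (p : ℝ) (hp : 1 < p) (K : ℕ) :
    ∃ C > (0 : ℝ), ∀ r : Fin K → ℝ,
      |(|∑ k, r k| ^ p - ∑ k, |r k| ^ p)| ≤
        C * ∑ k, ∑ k', (if k' ≠ k then |r k'| * |r k| ^ (p - 1) else 0) := by
  have hp1 : (1:ℝ) ≤ p := hp.le
  have hp0 : (0:ℝ) < p := lt_trans one_pos hp
  refine ⟨p * (K:ℝ) ^ (p - 1) + 1, by positivity, fun r => ?_⟩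
  set C : ℝ := p * (K:ℝ) ^ (p - 1) + 1 with hC
  rcases Nat.eq_zero_or_pos K with hK | hK
  · subst hK
    simp [Real.zero_rpow hp0.ne']
  -- choose k0 maximizing |r k|
  have hne : (Finset.univ : Finset (Fin K)).Nonempty := by
    simpa [Finset.univ_nonempty_iff] using Fin.pos_iff_nonempty.mp hK
  obtain ⟨k0, -, hk0⟩ := Finset.exists_max_image Finset.univ (fun k => |r k|) hne
  set M : ℝ := |r k0| with hM
  have hM0 : 0 ≤ M := abs_nonneg _
  have hMk : ∀ k, |r k| ≤ M := fun k => hk0 k (Finset.mem_univ k)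
  set t : ℝ := ∑ k ∈ Finset.univ.erase k0, |r k| with ht
  have ht0 : 0 ≤ t := Finset.sum_nonneg fun k _ => abs_nonneg _
  have hsum_abs : |∑ k, r k| ≤ (K:ℝ) * M := by
    calc |∑ k, r k| ≤ ∑ k, |r k| := Finset.abs_sum_le_sum_abs _ _
      _ ≤ ∑ _k : Fin K, M := Finset.sum_le_sum fun k _ => hMk k
      _ = (K:ℝ) * M := by simp [mul_comm]
  have hK1 : (1:ℝ) ≤ (K:ℝ) := by exact_mod_cast hK
  have hMK : M ≤ (K:ℝ) * M := by nlinarith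
  have hsplit : ∑ k, r k = r k0 + ∑ k ∈ Finset.univ.erase k0, r k :=
    (Finset.add_sum_erase _ _ (Finset.mem_univ k0)).symm
  have hdiff : |(|∑ k, r k| - M)| ≤ t := by
    have h1 : |∑ k ∈ Finset.univ.erase k0, r k| ≤ t :=
      Finset.abs_sum_le_sum_abs _ _
    have h2 : |(|∑ k, r k| - |r k0|)| ≤ |∑ k, r k - r k0| := abs_abs_sub_abs_le_abs_sub _ _
    have h3 : ∑ k, r k - r k0 = ∑ k ∈ Finset.univ.erase k0, r k := by
      rw [hsplit]; ring
    rw [hM]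
    calc |(|∑ k, r k| - |r k0|)| ≤ |∑ k, r k - r k0| := h2
      _ = |∑ k ∈ Finset.univ.erase k0, r k| := by rw [h3]
      _ ≤ t := h1
  have claim1 : |(|∑ k, r k| ^ p - M ^ p)| ≤ p * ((K:ℝ) * M) ^ (p - 1) * t := by
    have h := abs_rpow_sub_rpow_aux hp1 (abs_nonneg (∑ k, r k)) hM0 hsum_abs hMK
    refine h.trans ?_
    exact mul_le_mul_of_nonneg_left hdiff (by positivity)
  have claim2 : |(∑ k, |r k| ^ p - M ^ p)| ≤ t * M ^ (p - 1) := by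
    have hsplit2 : ∑ k, |r k| ^ p = |r k0| ^ p + ∑ k ∈ Finset.univ.erase k0, |r k| ^ p :=
      (Finset.add_sum_erase _ _ (Finset.mem_univ k0)).symm
    have hterm : ∀ k ∈ Finset.univ.erase k0, |r k| ^ p ≤ |r k| * M ^ (p - 1) := by
      intro k _
      have heq : |r k| ^ p = |r k| * |r k| ^ (p - 1) := by
        rw [← Real.rpow_one_add' (abs_nonneg _) (by simp [hp0.ne'])]
        ring_nf
      rw [heq]
      exact mul_le_mul_of_nonneg_left
        (Real.rpow_le_rpow (abs_nonneg _) (hMk k) (by linarith)) (abs_nonneg _)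
    have hnn : 0 ≤ ∑ k ∈ Finset.univ.erase k0, |r k| ^ p :=
      Finset.sum_nonneg fun k _ => Real.rpow_nonneg (abs_nonneg _) _
    have heq2 : ∑ k, |r k| ^ p - M ^ p = ∑ k ∈ Finset.univ.erase k0, |r k| ^ p := by
      rw [hsplit2, hM]; ring
    rw [heq2, abs_of_nonneg hnn, ht, Finset.sum_mul]
    exact Finset.sum_le_sum hterm
  have hRHSterm_nn : ∀ k ∈ (Finset.univ : Finset (Fin K)),
      0 ≤ ∑ k', (if k' ≠ k then |r k'| * |r k| ^ (p - 1) else 0) := by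
    intro k _
    refine Finset.sum_nonneg fun k' _ => ?_
    split
    · positivity
    · exact le_rfl
  have hinner : ∑ k', (if k' ≠ k0 then |r k'| * |r k0| ^ (p - 1) else 0)
      = t * M ^ (p - 1) := by
    rw [ht, hM, Finset.sum_mul, ← Finset.sum_filter]
    congr 1
    ext k
    simp [Finset.mem_filter, Finset.mem_erase]
  have hRHS : t * M ^ (p - 1) ≤
      ∑ k, ∑ k', (if k' ≠ k then |r k'| * |r k| ^ (p - 1) else 0) := by
    rw [← hinner]
    exact Finset.single_le_sum hRHSterm_nn (Finset.mem_univ k0)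
  have hfinal : |(|∑ k, r k| ^ p - ∑ k, |r k| ^ p)| ≤ C * (t * M ^ (p - 1)) := by
    have htri : |(|∑ k, r k| ^ p - ∑ k, |r k| ^ p)| ≤
        |(|∑ k, r k| ^ p - M ^ p)| + |(∑ k, |r k| ^ p - M ^ p)| := by
      have h := abs_sub_le (|∑ k, r k| ^ p) (M ^ p) (∑ k, |r k| ^ p)
      rw [abs_sub_comm (M ^ p)] at h
      exact h
    have hmul : p * ((K:ℝ) * M) ^ (p - 1) * t + t * M ^ (p - 1) = C * (t * M ^ (p - 1)) := by
      rw [Real.mul_rpow (Nat.cast_nonneg K) hM0, hC]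
      ring
    linarith
  refine hfinal.trans ?_
  have hC0 : 0 ≤ C := by positivity
  exact mul_le_mul_of_nonneg_left hRHS hC0
end
end

section
/- Let H_ℓ be the matrix operator H_ℓ = [[−Δ − (7/3)W_ℓ^(4/3), −ℓ·∇],[ℓ·∇, Id]] and Z_ℓ^W = (W_ℓ, −ℓ·∇W_ℓ)ᵀ. Then the pairing ⟨H_ℓ Z_ℓ^W, Z_ℓ^W⟩_{L²} = −(4/3)∫_{ℝ⁵} W_ℓ^(10/3). -/
noncomputable section

open MeasureTheory RealInnerProductSpace

def Tl (l x : EuclideanSpace ℝ (Fin 5)) : EuclideanSpace ℝ (Fin 5) :=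
  (((1 - ‖l‖ ^ 2) ^ (-(1 : ℝ) / 2) - 1) * (⟪l, x⟫ / ‖l‖ ^ 2)) • l + x

def Wl (l x : EuclideanSpace ℝ (Fin 5)) : ℝ := W (Tl l x)

/-- Directional derivative `ℓ·∇f`. -/
def dl (l : EuclideanSpace ℝ (Fin 5)) (f : EuclideanSpace ℝ (Fin 5) → ℝ)
    (x : EuclideanSpace ℝ (Fin 5)) : ℝ :=
  fderiv ℝ f x l

abbrev E5 := EuclideanSpace ℝ (Fin 5)

def Ac (l : E5) : E5 →L[ℝ] E5 :=
  ContinuousLinearMap.id ℝ E5 +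
    (((1 - ‖l‖ ^ 2) ^ (-(1 : ℝ) / 2) - 1) / ‖l‖ ^ 2) • (innerSL ℝ l).smulRight l

lemma Tl_eq_Ac (l : E5) : Tl l = ⇑(Ac l) := by
  funext x
  simp only [Tl, Ac, ContinuousLinearMap.add_apply, ContinuousLinearMap.coe_id', id_eq,
    ContinuousLinearMap.coe_smul', Pi.smul_apply, ContinuousLinearMap.smulRight_apply,
    innerSL_apply_apply, smul_smul]
  rw [add_comm]
  congr 1
  ring_nf

lemma hasFDerivAt_cp (p : ℝ) (y : E5) :
    HasFDerivAt (fun x : E5 => (1 + ‖x‖ ^ 2 / 15) ^ p)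
      (((2 * p / 15) * (1 + ‖y‖ ^ 2 / 15) ^ (p - 1)) • innerSL ℝ y) y := by
  have hy : (0:ℝ) < 1 + ‖y‖ ^ 2 / 15 := by positivity
  have h1 : HasFDerivAt (fun x : E5 => ‖x‖ ^ 2) ((2:ℝ) • innerSL ℝ y) y := by
    have h := (hasFDerivAt_id (𝕜 := ℝ) y).inner ℝ (hasFDerivAt_id y)
    have heq : (fun x : E5 => ‖x‖ ^ 2) = fun x : E5 => ⟪x, x⟫ :=
      funext fun x => (real_inner_self_eq_norm_sq x).symm
    rw [heq]
    refine h.congr_fderiv ?_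
    ext v
    simp [fderivInnerCLM_apply, real_inner_comm]
    rw [two_mul]
  have h2 : HasDerivAt (fun t : ℝ => (1 + t / 15) ^ p)
      ((1/15) * p * (1 + ‖y‖ ^ 2 / 15) ^ (p - 1)) (‖y‖ ^ 2) := by
    have hb : HasDerivAt (fun t : ℝ => 1 + t / 15) (1/15) (‖y‖ ^ 2) := by
      simpa using ((hasDerivAt_id (‖y‖ ^ 2)).div_const 15).const_add 1
    simpa using hb.rpow_const (Or.inl (ne_of_gt hy))
  have h3 := h2.comp_hasFDerivAt y h1
  have heq : ((1/15) * p * (1 + ‖y‖ ^ 2 / 15) ^ (p - 1)) • ((2:ℝ) • innerSL ℝ y)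
      = ((2 * p / 15) * (1 + ‖y‖ ^ 2 / 15) ^ (p - 1)) • innerSL ℝ y := by
    rw [smul_smul]; congr 1; ring
  rw [heq] at h3
  exact h3

lemma Wl_eq (l x : E5) : Wl l x = (1 + ‖Ac l x‖ ^ 2 / 15) ^ (-(3 : ℝ) / 2) := by
  rw [Wl, W, Tl_eq_Ac]

lemma hasFDerivAt_Wl (l x : E5) :
    HasFDerivAt (Wl l)
      ((-(1/5) * (1 + ‖Ac l x‖ ^ 2 / 15) ^ (-(5:ℝ)/2)) • ((innerSL ℝ (Ac l x)).comp (Ac l))) x := by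
  have h := (hasFDerivAt_cp (-(3:ℝ)/2) (Ac l x)).comp x (Ac l).hasFDerivAt
  have hfun : Wl l = (fun y : E5 => (1 + ‖y‖ ^ 2 / 15) ^ (-(3:ℝ)/2)) ∘ ⇑(Ac l) := by
    funext z; simp [Wl, W, Tl_eq_Ac, Function.comp]
  rw [hfun]
  have heq : (((2 * (-(3:ℝ)/2) / 15) * (1 + ‖Ac l x‖ ^ 2 / 15) ^ (-(3:ℝ)/2 - 1)) • innerSL ℝ (Ac l x)).comp (Ac l)
      = (-(1/5) * (1 + ‖Ac l x‖ ^ 2 / 15) ^ (-(5:ℝ)/2)) • ((innerSL ℝ (Ac l x)).comp (Ac l)) := by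
    rw [ContinuousLinearMap.smul_comp]
    norm_num
  rw [heq] at h
  exact h

lemma fderiv_Wl (l x v : E5) :
    fderiv ℝ (Wl l) x v
      = (-(1/5) * (1 + ‖Ac l x‖ ^ 2 / 15) ^ (-(5:ℝ)/2)) * ⟪Ac l x, Ac l v⟫ := by
  rw [(hasFDerivAt_Wl l x).fderiv]
  simp [ContinuousLinearMap.smul_apply, smul_eq_mul]

lemma fderiv2_Wl (l x u v : E5) :
    fderiv ℝ (fun y => fderiv ℝ (Wl l) y v) x u
      = (1/15) * (1 + ‖Ac l x‖ ^ 2 / 15) ^ (-(7:ℝ)/2) * ⟪Ac l x, Ac l u⟫ * ⟪Ac l x, Ac l v⟫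
        + (-(1/5)) * (1 + ‖Ac l x‖ ^ 2 / 15) ^ (-(5:ℝ)/2) * ⟪Ac l u, Ac l v⟫ := by
  set A := Ac l with hA
  have hfun : (fun y => fderiv ℝ (Wl l) y v)
      = fun y => (-(1/5) * (1 + ‖A y‖ ^ 2 / 15) ^ (-(5:ℝ)/2)) * ⟪A v, A y⟫ := by
    funext y; rw [fderiv_Wl, real_inner_comm]
  rw [hfun]
  have hg1 : HasFDerivAt (fun y : E5 => -(1/5) * (1 + ‖A y‖ ^ 2 / 15) ^ (-(5:ℝ)/2))
      ((-(1/5) : ℝ) • (((2 * (-(5:ℝ)/2) / 15) *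
        (1 + ‖A x‖ ^ 2 / 15) ^ (-(5:ℝ)/2 - 1)) • ((innerSL ℝ (A x)).comp A))) x := by
    have h := (hasFDerivAt_cp (-(5:ℝ)/2) (A x)).comp x A.hasFDerivAt
    rw [ContinuousLinearMap.smul_comp] at h
    exact h.const_mul _
  have hg2 : HasFDerivAt (fun y : E5 => ⟪A v, A y⟫) ((innerSL ℝ (A v)).comp A) x :=
    ((innerSL ℝ (A v)).comp A).hasFDerivAt
  rw [(hg1.fun_mul hg2).fderiv]
  simp only [ContinuousLinearMap.add_apply, ContinuousLinearMap.smul_apply,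
    ContinuousLinearMap.comp_apply, innerSL_apply_apply, smul_eq_mul]
  rw [real_inner_comm (A v) (A u), real_inner_comm (A v) (A x)]
  have hexp : (-(5:ℝ)/2 - 1) = (-(7:ℝ)/2) := by norm_num
  rw [hexp]
  ring

lemma inner_Ac (l y z : E5) :
    ⟪Ac l y, Ac l z⟫ = ⟪y, z⟫
      + (2 * (((1 - ‖l‖ ^ 2) ^ (-(1 : ℝ) / 2) - 1) / ‖l‖ ^ 2)
          + (((1 - ‖l‖ ^ 2) ^ (-(1 : ℝ) / 2) - 1) / ‖l‖ ^ 2) ^ 2 * ‖l‖ ^ 2)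
        * (⟪l, y⟫ * ⟪l, z⟫) := by
  set c := ((1 - ‖l‖ ^ 2) ^ (-(1 : ℝ) / 2) - 1) / ‖l‖ ^ 2
  simp only [Ac, ContinuousLinearMap.add_apply, ContinuousLinearMap.coe_id', id_eq,
    ContinuousLinearMap.coe_smul', Pi.smul_apply, ContinuousLinearMap.smulRight_apply,
    innerSL_apply_apply]
  simp only [inner_add_left, inner_add_right, real_inner_smul_left, real_inner_smul_right,
    real_inner_self_eq_norm_sq]
  rw [real_inner_comm y l]
  ring

lemma sum_comp_sq (y z : E5) (a : ℝ) :
    ∑ i : Fin 5, (y i + a * z i) ^ 2 = ‖y‖ ^ 2 + 2 * a * ⟪y, z⟫ + a ^ 2 * ‖z‖ ^ 2 := by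
  have hy : ⟪y, y⟫ = ∑ i : Fin 5, y i * y i := by
    simp only [PiLp.inner_apply, RCLike.inner_apply, conj_trivial]
  have hz : ⟪z, z⟫ = ∑ i : Fin 5, z i * z i := by
    simp only [PiLp.inner_apply, RCLike.inner_apply, conj_trivial]
  have hyz : ⟪y, z⟫ = ∑ i : Fin 5, y i * z i := by
    simp [PiLp.inner_apply, RCLike.inner_apply, conj_trivial, mul_comm]
  rw [← real_inner_self_eq_norm_sq y, ← real_inner_self_eq_norm_sq z, hy, hz, hyz]
  rw [Finset.mul_sum, Finset.mul_sum, ← Finset.sum_add_distrib, ← Finset.sum_add_distrib]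
  exact Finset.sum_congr rfl fun i _ => by ring

lemma norm_Ac_sq (l x : E5) :
    ‖Ac l x‖ ^ 2 = ‖x‖ ^ 2
      + (2 * (((1 - ‖l‖ ^ 2) ^ (-(1 : ℝ) / 2) - 1) / ‖l‖ ^ 2)
          + (((1 - ‖l‖ ^ 2) ^ (-(1 : ℝ) / 2) - 1) / ‖l‖ ^ 2) ^ 2 * ‖l‖ ^ 2) * ⟪l, x⟫ ^ 2 := by
  rw [← real_inner_self_eq_norm_sq, inner_Ac, real_inner_self_eq_norm_sq]
  ring

lemma lap_sub (l : E5) (hl0 : l ≠ 0) (hl : ‖l‖ < 1) (x : E5) :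
    lap (Wl l) x - fderiv ℝ (fun y => fderiv ℝ (Wl l) y l) x l
      = -(1 + ‖Ac l x‖ ^ 2 / 15) ^ (-(7:ℝ)/2) := by
  have hl' : 0 < ‖l‖ := norm_pos_iff.mpr hl0
  have hm0 : 0 < ‖l‖ ^ 2 := by positivity
  have hm1 : ‖l‖ ^ 2 < 1 := by nlinarith [norm_nonneg l]
  have h1m : (0:ℝ) < 1 - ‖l‖ ^ 2 := by linarith
  set m := ‖l‖ ^ 2 with hm
  set γ := (1 - m) ^ (-(1:ℝ)/2) with hγ
  have hγ2 : γ ^ 2 * (1 - m) = 1 := by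
    rw [hγ, ← Real.rpow_natCast ((1 - m) ^ (-(1:ℝ)/2)) 2, ← Real.rpow_mul h1m.le]
    norm_num
    rw [Real.rpow_neg_one]
    exact inv_mul_cancel₀ (ne_of_gt h1m)
  set c₀ := (γ - 1) / m with hc₀
  set q := 2 * c₀ + c₀ ^ 2 * m with hqdef
  have hc₀m : c₀ * m = γ - 1 := div_mul_cancel₀ _ (ne_of_gt hm0)
  have hγ2m : γ ^ 2 * m = γ ^ 2 - 1 := by linear_combination -hγ2
  have hq1 : q * m = γ ^ 2 * m := by
    rw [hqdef]
    linear_combination (γ + 1 + c₀ * m) * hc₀m - hγ2m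
  have hqg : q = γ ^ 2 := mul_right_cancel₀ (ne_of_gt hm0) hq1
  have hqm : q * (1 - m) = 1 := by rw [hqg]; exact hγ2
  have hsingle : ∀ (v : E5) (i : Fin 5), ⟪v, EuclideanSpace.single i (1:ℝ)⟫ = v i := by
    intro v i
    rw [EuclideanSpace.inner_single_right]
    simp
  have hsumsq : ∀ z : E5, ∑ i : Fin 5, z i ^ 2 = ‖z‖ ^ 2 := by
    intro z
    simpa using sum_comp_sq z z 0
  set c := 1 + ‖Ac l x‖ ^ 2 / 15 with hcdef
  have hc : (0:ℝ) < c := by positivity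
  set p := (⟪l, x⟫ : ℝ) with hp
  -- the pure second derivative in direction l
  have hD2 : fderiv ℝ (fun y => fderiv ℝ (Wl l) y l) x l
      = (1/15) * c ^ (-(7:ℝ)/2) * (p + q * p * m) ^ 2
        + (-(1/5)) * c ^ (-(5:ℝ)/2) * (m + q * m ^ 2) := by
    rw [fderiv2_Wl, inner_Ac, inner_Ac]
    rw [real_inner_self_eq_norm_sq l, real_inner_comm l x]
    rw [← hm, ← hγ, ← hc₀, ← hqdef, ← hcdef, ← hp]
    ring
  -- each diagonal term of the Laplacian
  have hterm : ∀ i : Fin 5,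
      fderiv ℝ (fun y => fderiv ℝ (Wl l) y (EuclideanSpace.single i 1)) x
          (EuclideanSpace.single i 1)
        = (1/15) * c ^ (-(7:ℝ)/2) * (x i + q * p * l i) ^ 2
          + (-(1/5)) * c ^ (-(5:ℝ)/2) * (1 + q * l i ^ 2) := by
    intro i
    rw [fderiv2_Wl, inner_Ac, inner_Ac]
    simp only [hsingle]
    have h1 : EuclideanSpace.single i (1:ℝ) i = 1 := by simp
    rw [h1, ← hm, ← hγ, ← hc₀, ← hqdef, ← hcdef, ← hp]
    ring
  have hlap : lap (Wl l) x
      = (1/15) * c ^ (-(7:ℝ)/2) * (‖x‖ ^ 2 + 2 * (q * p) * p + (q * p) ^ 2 * m)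
        + (-(1/5)) * c ^ (-(5:ℝ)/2) * (5 + q * m) := by
    rw [lap, Finset.sum_congr rfl (fun i _ => hterm i)]
    rw [Finset.sum_add_distrib, ← Finset.mul_sum, ← Finset.mul_sum]
    rw [sum_comp_sq x l (q * p)]
    have h2 : ∑ i : Fin 5, (1 + q * l i ^ 2) = 5 + q * m := by
      rw [Finset.sum_add_distrib, ← Finset.mul_sum, hsumsq l, ← hm]
      simp
    rw [h2, real_inner_comm l x, ← hm, ← hp]
  have hnA : ‖Ac l x‖ ^ 2 = ‖x‖ ^ 2 + q * p ^ 2 := by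
    rw [norm_Ac_sq, ← hm, ← hγ, ← hc₀, ← hqdef, ← hp]
  have hcc : c * c ^ (-(7:ℝ)/2) = c ^ (-(5:ℝ)/2) := by
    rw [show (-(5:ℝ)/2) = 1 + (-(7:ℝ)/2) by norm_num, Real.rpow_add hc, Real.rpow_one]
  rw [hlap, hD2]
  linear_combination ((1/15) * c ^ (-(7:ℝ)/2) * p ^ 2 * (1 + q * m)
      - (1/5) * c ^ (-(5:ℝ)/2) * m) * hqm
    - (1/15) * c ^ (-(7:ℝ)/2) * hnA - c ^ (-(7:ℝ)/2) * hcdef + hcc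


theorem pairing_HZW_ZW (l : EuclideanSpace ℝ (Fin 5)) (hl0 : l ≠ 0) (hl : ‖l‖ < 1) :
    (∫ x, (((-lap (Wl l) x - (7 / 3) * (Wl l x) ^ ((4 : ℝ) / 3) * Wl l x)
          - dl l (fun y => -(dl l (Wl l) y)) x) * Wl l x
        + (dl l (Wl l) x + -(dl l (Wl l) x)) * (-(dl l (Wl l) x))))
      = -(4 / 3) * ∫ x, (Wl l x) ^ ((10 : ℝ) / 3) := by
  have hpt : ∀ x : EuclideanSpace ℝ (Fin 5),
      (((-lap (Wl l) x - (7 / 3) * (Wl l x) ^ ((4 : ℝ) / 3) * Wl l x)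
          - dl l (fun y => -(dl l (Wl l) y)) x) * Wl l x
        + (dl l (Wl l) x + -(dl l (Wl l) x)) * (-(dl l (Wl l) x)))
      = -(4 / 3) * (Wl l x) ^ ((10 : ℝ) / 3) := by
    intro x
    set c := 1 + ‖Ac l x‖ ^ 2 / 15 with hcdef
    have hc : (0:ℝ) < c := by positivity
    have hW : Wl l x = c ^ (-(3:ℝ)/2) := Wl_eq l x
    have hneg : dl l (fun y => -(dl l (Wl l) y)) x
        = -(fderiv ℝ (fun y => fderiv ℝ (Wl l) y l) x l) := by
      simp only [dl]
      rw [fderiv_fun_neg]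
      simp
    have hls := lap_sub l hl0 hl x
    rw [← hcdef] at hls
    have h43 : Wl l x ^ ((4:ℝ)/3) * Wl l x = c ^ (-(7:ℝ)/2) := by
      rw [hW, ← Real.rpow_mul hc.le, ← Real.rpow_add hc]
      norm_num
    have h103 : Wl l x ^ ((10:ℝ)/3) = c ^ (-(5:ℝ)) := by
      rw [hW, ← Real.rpow_mul hc.le]
      norm_num
    have hprod : c ^ (-(7:ℝ)/2) * c ^ (-(3:ℝ)/2) = c ^ (-(5:ℝ)) := by
      rw [← Real.rpow_add hc]
      norm_num
    have hla : lap (Wl l) x = lap (Wl l) x := rfl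
    rw [hneg]
    linear_combination (-(Wl l x)) * hls + (-(7/3) * Wl l x) * h43
      + (-(4/3) * c ^ (-(7:ℝ)/2)) * hW + (4/3) * h103 + (-(4/3)) * hprod
  have heq : (∫ x, (((-lap (Wl l) x - (7 / 3) * (Wl l x) ^ ((4 : ℝ) / 3) * Wl l x)
          - dl l (fun y => -(dl l (Wl l) y)) x) * Wl l x
        + (dl l (Wl l) x + -(dl l (Wl l) x)) * (-(dl l (Wl l) x))))
      = ∫ x, -(4 / 3) * (Wl l x) ^ ((10 : ℝ) / 3) := by
    congr 1
    funext x
    exact hpt x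
  rw [heq, integral_const_mul]
end
end
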